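/- Let V : ℤ → ℝ be bounded and let H be the bounded self-adjoint operator on ℓ²(ℤ; ℂ) given by (Hφ)(q) = −φ(q+1) − φ(q−1) + V(q)·φ(q). Suppose e₀ := inf of the real spectrum of H is an eigenvalue of H (i.e. there is a nonzero ψ ∈ ℓ²(ℤ; ℂ) with Hψ = e₀ψ). Then for every φ ∈ ℓ²(ℤ) taking real strictly positive values φ(q) > 0 for all q ∈ ℤ, and for all real numbers a, b such that a·φ(q) ≤ −φ(q+1) − φ(q−1) + V(q)φ(q) ≤ b·φ(q) for every q ∈ ℤ, one has a ≤ e₀ ≤ b; equivalently inf_q(−(φ(q+1)+φ(q−1))/φ(q) + V(q)) ≤ e₀ ≤ sup_q(−(φ(q+1)+φ(q−1))/φ(q) + V(q)). -/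

import Mathlib

open scoped InnerProductSpace Pointwise

private lemma sb_summable_abs_mul {x y : ℤ → ℝ}
    (hx : Summable fun q => x q ^ 2) (hy : Summable fun q => y q ^ 2) :
    Summable fun q => |x q * y q| := by
  apply Summable.of_nonneg_of_le (fun q => abs_nonneg _) (fun q => ?_) ((hx.add hy).div_const 2)
  rw [abs_mul]
  nlinarith [sq_nonneg (|x q| - |y q|), sq_abs (x q), sq_abs (y q),
    abs_nonneg (x q), abs_nonneg (y q)]

private lemma sb_summable_mul {x y : ℤ → ℝ}
    (hx : Summable fun q => x q ^ 2) (hy : Summable fun q => y q ^ 2) :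
    Summable fun q => x q * y q :=
  (sb_summable_abs_mul hx hy).of_abs

private lemma sb_summable_V {V : ℤ → ℝ} {C : ℝ} (hV : ∀ q, |V q| ≤ C) {x y : ℤ → ℝ}
    (hx : Summable fun q => x q ^ 2) (hy : Summable fun q => y q ^ 2) :
    Summable fun q => V q * (x q * y q) := by
  apply Summable.of_abs
  apply Summable.of_nonneg_of_le (fun q => abs_nonneg _) (fun q => ?_)
    ((sb_summable_abs_mul hx hy).mul_left C)
  rw [abs_mul]
  exact mul_le_mul_of_nonneg_right (hV q) (abs_nonneg _)

private lemma sb_shift_add {y : ℤ → ℝ} (hy : Summable fun q => y q ^ 2) :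
    Summable fun q => y (q + 1) ^ 2 := by
  have := ((Equiv.addRight (1:ℤ)).summable_iff (f := fun q => y q ^ 2)).mpr hy
  exact this

private lemma sb_shift_sub {y : ℤ → ℝ} (hy : Summable fun q => y q ^ 2) :
    Summable fun q => y (q - 1) ^ 2 := by
  have := ((Equiv.subRight (1:ℤ)).summable_iff (f := fun q => y q ^ 2)).mpr hy
  exact this

private lemma sb_tsum_shift1 (x y : ℤ → ℝ) :
    ∑' q, x q * y (q + 1) = ∑' q, x (q - 1) * y q := by
  have h := (Equiv.subRight (1:ℤ)).tsum_eq (f := fun q => x q * y (q + 1))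
  simpa using h.symm

private lemma sb_tsum_shift2 (x y : ℤ → ℝ) :
    ∑' q, x q * y (q - 1) = ∑' q, x (q + 1) * y q := by
  have h := (Equiv.addRight (1:ℤ)).tsum_eq (f := fun q => x q * y (q - 1))
  simpa using h.symm

private lemma sb_pairing {V : ℤ → ℝ} {C : ℝ} (hV : ∀ q, |V q| ≤ C) {x y : ℤ → ℝ}
    (hx : Summable fun q => x q ^ 2) (hy : Summable fun q => y q ^ 2) :
    ∑' q, x q * (-y (q + 1) - y (q - 1) + V q * y q)
      = ∑' q, (-x (q + 1) - x (q - 1) + V q * x q) * y q := by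
  have SV : Summable fun q => V q * (x q * y q) := sb_summable_V hV hx hy
  have Sxy1 : Summable fun q => x q * y (q + 1) := sb_summable_mul hx (sb_shift_add hy)
  have Sxy2 : Summable fun q => x q * y (q - 1) := sb_summable_mul hx (sb_shift_sub hy)
  have Sx1y : Summable fun q => x (q + 1) * y q := sb_summable_mul (sb_shift_add hx) hy
  have Sx2y : Summable fun q => x (q - 1) * y q := sb_summable_mul (sb_shift_sub hx) hy
  have hLs : ∀ q : ℤ, x q * (-y (q + 1) - y (q - 1) + V q * y q)
      = V q * (x q * y q) - x q * y (q + 1) - x q * y (q - 1) := fun q => by ring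
  have hRs : ∀ q : ℤ, (-x (q + 1) - x (q - 1) + V q * x q) * y q
      = V q * (x q * y q) - x (q + 1) * y q - x (q - 1) * y q := fun q => by ring
  rw [tsum_congr hLs, tsum_congr hRs, Summable.tsum_sub (SV.sub Sxy1) Sxy2, Summable.tsum_sub SV Sxy1,
    Summable.tsum_sub (SV.sub Sx1y) Sx2y, Summable.tsum_sub SV Sx1y, sb_tsum_shift1 x y, sb_tsum_shift2 x y]
  ring

private lemma sb_lp_sq_summable {E : Type*} [NormedAddCommGroup E]
    (f : lp (fun _ : ℤ => E) 2) : Summable fun q => ‖f q‖ ^ 2 := by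
  have h := lp.memℓp f
  rw [memℓp_gen_iff (by norm_num)] at h
  convert h using 2 with q
  rw [ENNReal.toReal_ofNat, Real.rpow_two]

/-- Let `H` be the discrete Schrödinger operator
`(Hφ)(q) = −φ(q+1) − φ(q−1) + V(q)φ(q)` on `ℓ²(ℤ; ℂ)` with bounded potential `V`, and
suppose `e₀ := inf` of the real spectrum of `H` is an eigenvalue of `H`.  Then for every
strictly positive real `φ ∈ ℓ²(ℤ)` and all `a b : ℝ` with
`a·φ(q) ≤ −φ(q+1) − φ(q−1) + V(q)φ(q) ≤ b·φ(q)` for all `q`, one has `a ≤ e₀ ≤ b`. -/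
theorem discrete_schrodinger_bounds (V : ℤ → ℝ) (C : ℝ) (hV : ∀ q, |V q| ≤ C)
    (H : lp (fun _ : ℤ => ℂ) 2 →L[ℂ] lp (fun _ : ℤ => ℂ) 2)
    (hH : ∀ (f : lp (fun _ : ℤ => ℂ) 2) (q : ℤ),
      (H f) q = -f (q + 1) - f (q - 1) + (V q : ℂ) * f q)
    (hsa : IsSelfAdjoint H)
    (e₀ : ℝ) (he₀ : e₀ = sInf {r : ℝ | (r : ℂ) ∈ spectrum ℂ H})
    (heig : ∃ ψ : lp (fun _ : ℤ => ℂ) 2, ψ ≠ 0 ∧ H ψ = (e₀ : ℂ) • ψ)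
    (φ : lp (fun _ : ℤ => ℝ) 2) (hφpos : ∀ q : ℤ, 0 < φ q)
    (a b : ℝ)
    (hab : ∀ q : ℤ, a * φ q ≤ -φ (q + 1) - φ (q - 1) + V q * φ q ∧
      -φ (q + 1) - φ (q - 1) + V q * φ q ≤ b * φ q) :
    a ≤ e₀ ∧ e₀ ≤ b := by
  obtain ⟨ψ, hψ0, hψeig⟩ := heig
  have hφ2 : Summable fun q => φ q ^ 2 := by
    have := sb_lp_sq_summable φ
    simpa [Real.norm_eq_abs, sq_abs] using this
  -- the φ-side pointwise quantity
  set W : ℤ → ℝ := fun q => -φ (q + 1) - φ (q - 1) + V q * φ q with hW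
  constructor
  · -- Part 1 : a ≤ e₀, via Kato's inequality for χ = |ψ|
    set χ : ℤ → ℝ := fun q => ‖ψ q‖ with hχ
    have hχ0 : ∀ q, 0 ≤ χ q := fun q => norm_nonneg _
    have hχ2 : Summable fun q => χ q ^ 2 := by
      have := sb_lp_sq_summable ψ
      simpa [hχ] using this
    have heq : ∀ q : ℤ, ψ (q + 1) + ψ (q - 1) = ((V q - e₀ : ℝ) : ℂ) * ψ q := by
      intro q
      have h1 := hH ψ q
      rw [hψeig] at h1
      have h2 : ((e₀ : ℂ) • ψ) q = (e₀ : ℂ) * ψ q := by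
        rw [lp.coeFn_smul]; rfl
      rw [h2] at h1
      push_cast
      linear_combination h1
    have hKato : ∀ q : ℤ, -χ (q + 1) - χ (q - 1) + V q * χ q ≤ e₀ * χ q := by
      intro q
      have h3 : |V q - e₀| * χ q ≤ χ (q + 1) + χ (q - 1) := by
        calc |V q - e₀| * χ q = ‖((V q - e₀ : ℝ) : ℂ) * ψ q‖ := by
              rw [norm_mul, Complex.norm_real, Real.norm_eq_abs]
          _ = ‖ψ (q + 1) + ψ (q - 1)‖ := by rw [heq q]
          _ ≤ χ (q + 1) + χ (q - 1) := norm_add_le _ _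
      have h4 := mul_le_mul_of_nonneg_right (le_abs_self (V q - e₀)) (hχ0 q)
      linarith
    have hS_sum : Summable fun q => χ q * φ q := sb_summable_mul hχ2 hφ2
    have hSpos : 0 < ∑' q, χ q * φ q := by
      obtain ⟨q₀, hq₀⟩ : ∃ q, ψ q ≠ 0 := by
        by_contra hc
        push_neg at hc
        exact hψ0 (lp.ext (funext fun q => by simpa using hc q))
      exact Summable.tsum_pos hS_sum (fun q => mul_nonneg (hχ0 q) (hφpos q).le) q₀
        (mul_pos (norm_pos_iff.mpr hq₀) (hφpos q₀))
    have hWsum : Summable fun q => χ q * W q := by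
      apply Summable.congr (f := fun q => V q * (χ q * φ q) - χ q * φ (q + 1) - χ q * φ (q - 1))
      · exact ((sb_summable_V hV hχ2 hφ2).sub
          (sb_summable_mul hχ2 (sb_shift_add hφ2))).sub
          (sb_summable_mul hχ2 (sb_shift_sub hφ2))
      · intro q; simp only [hW]; ring
    have hχWsum : Summable fun q => (-χ (q + 1) - χ (q - 1) + V q * χ q) * φ q := by
      apply Summable.congr (f := fun q => V q * (χ q * φ q) - χ (q + 1) * φ q - χ (q - 1) * φ q)
      · exact ((sb_summable_V hV hχ2 hφ2).sub
          (sb_summable_mul (sb_shift_add hχ2) hφ2)).sub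
          (sb_summable_mul (sb_shift_sub hχ2) hφ2)
      · intro q; ring
    have step1 : a * ∑' q, χ q * φ q ≤ ∑' q, χ q * W q := by
      rw [← tsum_mul_left]
      apply Summable.tsum_le_tsum ?_ (hS_sum.mul_left a) hWsum
      intro q
      calc a * (χ q * φ q) = χ q * (a * φ q) := by ring
        _ ≤ χ q * W q := mul_le_mul_of_nonneg_left (hab q).1 (hχ0 q)
    have step2 : ∑' q, χ q * W q = ∑' q, (-χ (q + 1) - χ (q - 1) + V q * χ q) * φ q :=
      sb_pairing hV hχ2 hφ2
    have step3 : ∑' q, (-χ (q + 1) - χ (q - 1) + V q * χ q) * φ q ≤ e₀ * ∑' q, χ q * φ q := by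
      rw [← tsum_mul_left]
      apply Summable.tsum_le_tsum ?_ hχWsum (hS_sum.mul_left e₀)
      intro q
      calc (-χ (q + 1) - χ (q - 1) + V q * χ q) * φ q ≤ (e₀ * χ q) * φ q :=
            mul_le_mul_of_nonneg_right (hKato q) (hφpos q).le
        _ = e₀ * (χ q * φ q) := by ring
    have : a * ∑' q, χ q * φ q ≤ e₀ * ∑' q, χ q * φ q := le_trans step1 (step2 ▸ step3)
    exact (mul_le_mul_iff_of_pos_right hSpos).mp this
  · -- Part 2 : e₀ ≤ b, via positivity of H - e₀
    haveI : Nontrivial (lp (fun _ : ℤ => ℂ) 2) := ⟨⟨ψ, 0, hψ0⟩⟩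
    have hbdd : BddBelow {r : ℝ | (r : ℂ) ∈ spectrum ℂ H} := by
      refine ⟨-‖H‖, fun r hr => ?_⟩
      have h1 : ‖(r : ℂ)‖ ≤ ‖H‖ := spectrum.norm_le_norm_of_mem hr
      rw [Complex.norm_real, Real.norm_eq_abs] at h1
      linarith [neg_abs_le r]
    set T : lp (fun _ : ℤ => ℂ) 2 →L[ℂ] lp (fun _ : ℤ => ℂ) 2 := H - (e₀ : ℂ) • 1 with hT
    have hTsa : IsSelfAdjoint T := by
      rw [hT, IsSelfAdjoint, star_sub, star_smul, star_one, Complex.star_def,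
        Complex.conj_ofReal, hsa.star_eq]
    have hTspec : ∀ x ∈ spectrum ℝ T, 0 ≤ x := by
      intro x hx
      have hxC : (x : ℂ) ∈ spectrum ℂ T := by
        rw [← Complex.coe_algebraMap]
        exact spectrum.algebraMap_mem ℂ hx
      have hsub : spectrum ℂ H - ({(e₀ : ℂ)} : Set ℂ) = spectrum ℂ T := by
        have := spectrum.sub_singleton_eq (R := ℂ) H (e₀ : ℂ)
        rwa [Algebra.algebraMap_eq_smul_one
          (A := lp (fun _ : ℤ => ℂ) 2 →L[ℂ] lp (fun _ : ℤ => ℂ) 2) (e₀ : ℂ)] at this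
      rw [← hsub] at hxC
      obtain ⟨w, hw, v, hv, hwv⟩ := hxC
      rw [Set.mem_singleton_iff] at hv
      subst hv
      have hwre : w = (w.re : ℂ) := hsa.mem_spectrum_eq_re hw
      have hwmem : w.re ∈ {r : ℝ | (r : ℂ) ∈ spectrum ℂ H} := by
        rw [Set.mem_setOf_eq, ← hwre]; exact hw
      have hle : e₀ ≤ w.re := he₀ ▸ csInf_le hbdd hwmem
      have : w.re - e₀ = x := by
        have := congrArg Complex.re hwv
        simpa using this
      linarith
    haveI : ContinuousFunctionalCalculus ℝ (lp (fun _ : ℤ => ℂ) 2 →L[ℂ] lp (fun _ : ℤ => ℂ) 2)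
        IsSelfAdjoint := IsSelfAdjoint.instContinuousFunctionalCalculus
    have hpos : (0 : lp (fun _ : ℤ => ℂ) 2 →L[ℂ] lp (fun _ : ℤ => ℂ) 2) ≤ T :=
      (StarOrderedRing.nonneg_iff_spectrum_nonneg (R := ℝ) T hTsa).mpr hTspec
    -- the complexification of φ
    set φC : lp (fun _ : ℤ => ℂ) 2 :=
      ⟨fun q : ℤ => ((φ q : ℝ) : ℂ), by
        have h := lp.memℓp φ
        rw [memℓp_gen_iff (by norm_num)] at h
        have : Memℓp (fun q : ℤ => ((φ q : ℝ) : ℂ)) 2 := by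
          rw [memℓp_gen_iff (by norm_num)]
          simpa using h
        exact this⟩ with hφC
    have hφCq : ∀ q : ℤ, φC q = ((φ q : ℝ) : ℂ) := fun q => rfl
    have hip : 0 ≤ Complex.re ⟪φC, T φC⟫_ℂ :=
      ((ContinuousLinearMap.nonneg_iff_isPositive T).mp hpos).re_inner_nonneg_right φC
    have hφW : Summable fun q => φ q * W q := by
      apply Summable.congr (f := fun q => V q * (φ q * φ q) - φ q * φ (q + 1) - φ q * φ (q - 1))
      · exact ((sb_summable_V hV hφ2 hφ2).sub
          (sb_summable_mul hφ2 (sb_shift_add hφ2))).sub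
          (sb_summable_mul hφ2 (sb_shift_sub hφ2))
      · intro q; simp only [hW]; ring
    have hφWC : Summable fun q => ((φ q * W q : ℝ) : ℂ) :=
      hφW.map Complex.ofRealHom.toAddMonoidHom Complex.continuous_ofReal
    have hφ2C : Summable fun q => ((φ q ^ 2 : ℝ) : ℂ) :=
      hφ2.map Complex.ofRealHom.toAddMonoidHom Complex.continuous_ofReal
    have hinner1 : ⟪φC, H φC⟫_ℂ = ∑' q, ((φ q * W q : ℝ) : ℂ) := by
      rw [lp.inner_eq_tsum]
      apply tsum_congr
      intro q
      have hHq : (H φC) q = ((W q : ℝ) : ℂ) := by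
        rw [hH φC q, hφCq, hφCq, hφCq, hW]
        push_cast
        ring
      rw [RCLike.inner_apply, hHq, hφCq]
      rw [Complex.conj_ofReal]
      push_cast
      ring
    have hinner2 : ⟪φC, φC⟫_ℂ = ∑' q, ((φ q ^ 2 : ℝ) : ℂ) := by
      rw [lp.inner_eq_tsum]
      apply tsum_congr
      intro q
      rw [RCLike.inner_apply, hφCq, Complex.conj_ofReal]
      push_cast
      ring
    have hre1 : Complex.re ⟪φC, H φC⟫_ℂ = ∑' q, φ q * W q := by
      rw [hinner1, Complex.re_tsum hφWC]
      apply tsum_congr; intro q; simp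
    have hre2 : Complex.re ⟪φC, φC⟫_ℂ = ∑' q, φ q ^ 2 := by
      rw [hinner2, Complex.re_tsum hφ2C]
      apply tsum_congr; intro q; simp [← Complex.ofReal_pow]
    have hexp : ⟪φC, T φC⟫_ℂ = ⟪φC, H φC⟫_ℂ - (e₀ : ℂ) * ⟪φC, φC⟫_ℂ := by
      rw [hT]
      rw [ContinuousLinearMap.sub_apply, inner_sub_right, ContinuousLinearMap.smul_apply,
        ContinuousLinearMap.one_apply, inner_smul_right]
    have hreT : Complex.re ⟪φC, T φC⟫_ℂ
        = (∑' q, φ q * W q) - e₀ * ∑' q, φ q ^ 2 := by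
      rw [hexp, Complex.sub_re, hre1]
      congr 1
      rw [Complex.mul_re, Complex.ofReal_re, Complex.ofReal_im, hre2]
      simp
    have hP : 0 < ∑' q, φ q ^ 2 :=
      Summable.tsum_pos hφ2 (fun q => sq_nonneg _) 0 (pow_pos (hφpos 0) 2)
    have hup : ∑' q, φ q * W q ≤ b * ∑' q, φ q ^ 2 := by
      rw [← tsum_mul_left]
      apply Summable.tsum_le_tsum ?_ hφW (hφ2.mul_left b)
      intro q
      calc φ q * W q ≤ φ q * (b * φ q) := mul_le_mul_of_nonneg_left (hab q).2 (hφpos q).le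
        _ = b * φ q ^ 2 := by ring
    have : e₀ * ∑' q, φ q ^ 2 ≤ b * ∑' q, φ q ^ 2 := by
      rw [hreT] at hip
      linarith
    exact (mul_le_mul_iff_of_pos_right hP).mp this
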